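/- Let π = [π_0, π_1, …, π_{n+1}] be a permutation with π_1 ≠ 1. Then there exists an operation o, which is either a prefix reversal or a prefix transposition, such that b(π·o) ≤ b(π) − 1, i.e., applying o removes at least one breakpoint. -/

import Mathlib

/-- A permutation on `n` elements: a list `[π₀, π₁, …, π_{n+1}]` of distinct
naturals that is a rearrangement of `0, 1, …, n+1` with `π₀ = 0` and
`π_{n+1} = n+1`. -/
def IsPerm (n : ℕ) (π : List ℕ) : Prop :=
  π.Perm (List.range (n + 2)) ∧ π.getD 0 0 = 0 ∧ π.getD (n + 1) 0 = n + 1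

/-- Breakpoint count `b(π)`: `1` plus the number of indices `i` with
`2 ≤ i ≤ n+1` and `|π_i − π_{i−1}| ≠ 1` (these are exactly the consecutive
pairs of the tail `π₁, …, π_{n+1}`). -/
def bp (π : List ℕ) : ℕ :=
  1 + ((π.drop 1).zip (π.drop 2)).countP
        (fun p => !(p.1 + 1 == p.2 || p.2 + 1 == p.1))

/-- Redefined breakpoint count `b′(π)`: the number of indices `i` with
`1 ≤ i ≤ n+1` and `|π_i − π_{i−1}| ≠ 1`. -/
def bp' (π : List ℕ) : ℕ :=
  (π.zip (π.drop 1)).countP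
    (fun p => !(p.1 + 1 == p.2 || p.2 + 1 == p.1))

/-- Prefix reversal `β(1,j)`: `[π₀, π_{j−1}, …, π₁, π_j, …, π_{n+1}]`. -/
def prefixReversal (π : List ℕ) (j : ℕ) : List ℕ :=
  π.take 1 ++ ((π.drop 1).take (j - 1)).reverse ++ π.drop j

/-- Prefix transposition `τ(1,j,k)`:
`[π₀, π_j, …, π_{k−1}, π₁, …, π_{j−1}, π_k, …, π_{n+1}]`. -/
def prefixTransposition (π : List ℕ) (j k : ℕ) : List ℕ :=
  π.take 1 ++ (π.drop j).take (k - j) ++ (π.drop 1).take (j - 1) ++ π.drop k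

/-- Prefix transreversal `βτ(1,j,k)`:
`[π₀, π_j, …, π_{k−1}, π_{j−1}, …, π₁, π_k, …, π_{n+1}]`. -/
def prefixTransreversal (π : List ℕ) (j k : ℕ) : List ℕ :=
  π.take 1 ++ (π.drop j).take (k - j) ++ ((π.drop 1).take (j - 1)).reverse ++ π.drop k

/-- A prefix operation: a prefix reversal, a prefix transposition, or a
prefix transreversal. -/
inductive PrefOp
  | rev (j : ℕ)
  | trans (j k : ℕ)
  | transrev (j k : ℕ)

/-- Apply a prefix operation to a permutation. -/
def PrefOp.apply (π : List ℕ) : PrefOp → List ℕ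
  | .rev j => prefixReversal π j
  | .trans j k => prefixTransposition π j k
  | .transrev j k => prefixTransreversal π j k

/-- Validity of a prefix operation on a permutation of `n` elements:
`3 ≤ j ≤ n+1` for a prefix reversal, `2 ≤ j < k ≤ n+1` for a prefix
transposition or a prefix transreversal. -/
def PrefOp.Valid (n : ℕ) : PrefOp → Prop
  | .rev j => 3 ≤ j ∧ j ≤ n + 1
  | .trans j k => 2 ≤ j ∧ j < k ∧ k ≤ n + 1
  | .transrev j k => 2 ≤ j ∧ j < k ∧ k ≤ n + 1

/-- Is the operation a prefix reversal? -/
def PrefOp.isRev : PrefOp → Bool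
  | .rev _ => true
  | _ => false

/-- Is the operation a prefix transreversal? -/
def PrefOp.isTransrev : PrefOp → Bool
  | .transrev _ _ => true
  | _ => false

/-- Apply a sequence of prefix operations, left to right. -/
def applySeq : List ℕ → List PrefOp → List ℕ
  | π, [] => π
  | π, o :: os => applySeq (o.apply π) os

/-- All operations in the sequence are valid for permutations of `n` elements. -/
def ValidSeq (n : ℕ) (ops : List PrefOp) : Prop :=
  ∀ o ∈ ops, o.Valid n

/-- `fm π` is `m(π) + 1`, where `m(π)` is the largest index `m` such that
`π_i = i` for all `0 ≤ i ≤ m`; i.e. the length of the longest already-sorted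
prefix of `π`. -/
def fm (π : List ℕ) : ℕ :=
  ((List.range π.length).takeWhile (fun i => π.getD i 0 == i)).length

/-- Forward-march prefix reversal: reverses the segment
`π_{m(π)+1}, …, π_{j−1}` in place. -/
def fmPrefixReversal (π : List ℕ) (j : ℕ) : List ℕ :=
  π.take (fm π) ++ ((π.drop (fm π)).take (j - fm π)).reverse ++ π.drop j

/-- Forward-march prefix transposition: cuts the segment
`π_{m(π)+1}, …, π_{j−1}` and pastes it between `π_{k−1}` and `π_k`. -/
def fmPrefixTransposition (π : List ℕ) (j k : ℕ) : List ℕ :=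
  π.take (fm π) ++ (π.drop j).take (k - j) ++
    (π.drop (fm π)).take (j - fm π) ++ π.drop k

/-- A forward-march operation: an FM prefix reversal or an FM prefix
transposition. -/
inductive FMOp
  | rev (j : ℕ)
  | trans (j k : ℕ)

/-- Apply a forward-march operation. -/
def FMOp.apply (π : List ℕ) : FMOp → List ℕ
  | .rev j => fmPrefixReversal π j
  | .trans j k => fmPrefixTransposition π j k

/-- Validity of a forward-march operation on a permutation `π` of `n`
elements: `m(π)+3 ≤ j ≤ n+1` for an FM prefix reversal, and
`m(π)+2 ≤ j ≤ n`, `j < k ≤ n+1` for an FM prefix transposition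
(recall `fm π = m(π) + 1`). -/
def FMOp.Valid (n : ℕ) (π : List ℕ) : FMOp → Prop
  | .rev j => fm π + 2 ≤ j ∧ j ≤ n + 1
  | .trans j k => fm π + 1 ≤ j ∧ j ≤ n ∧ j < k ∧ k ≤ n + 1

/-- Is the forward-march operation an FM prefix reversal? -/
def FMOp.isRev : FMOp → Bool
  | .rev _ => true
  | _ => false

/-- Apply a sequence of forward-march operations, left to right. -/
def applyFMSeq : List ℕ → List FMOp → List ℕ
  | π, [] => π
  | π, o :: os => applyFMSeq (o.apply π) os

/-- Validity of a sequence of forward-march operations, where each operation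
must be valid for the permutation obtained after applying the previous ones. -/
def FMValidSeq (n : ℕ) : List ℕ → List FMOp → Prop
  | _, [] => True
  | π, o :: os => o.Valid n π ∧ FMValidSeq n (o.apply π) os


/-! ### Auxiliary definitions and lemmas -/

/-- Breakpoint indicator for one adjacent pair. -/
def cnt (a b : ℕ) : ℕ := if a + 1 = b ∨ b + 1 = a then 0 else 1

lemma cnt_le_one (a b : ℕ) : cnt a b ≤ 1 := by unfold cnt; split <;> omega

lemma cnt_comm (a b : ℕ) : cnt a b = cnt b a := by
  unfold cnt
  by_cases h : a + 1 = b ∨ b + 1 = a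
  · rw [if_pos h, if_pos h.symm]
  · rw [if_neg h, if_neg (fun hh => h hh.symm)]

lemma cnt_succ (a : ℕ) : cnt a (a + 1) = 0 := by simp [cnt]

lemma cnt_succ' (a : ℕ) : cnt (a + 1) a = 0 := by simp [cnt]

lemma cnt_eq_one_of_not (a b : ℕ) (h : ¬ (a + 1 = b ∨ b + 1 = a)) : cnt a b = 1 := by
  simp [cnt, h]

lemma cnt_cases (a b : ℕ) (h : cnt a b ≠ 1) : a + 1 = b ∨ b + 1 = a := by
  by_contra hc; exact h (cnt_eq_one_of_not a b hc)

/-- Sum of `cnt` over consecutive pairs. -/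
def g : List ℕ → ℕ
  | a :: b :: l => cnt a b + g (b :: l)
  | _ => 0

@[simp] lemma g_nil : g [] = 0 := rfl
@[simp] lemma g_single (a : ℕ) : g [a] = 0 := rfl
lemma g_cons_cons (a b : ℕ) (l : List ℕ) : g (a :: b :: l) = cnt a b + g (b :: l) := rfl

/-- Default-valued last element. -/
def lastD : List ℕ → ℕ
  | [] => 0
  | [a] => a
  | _ :: b :: l => lastD (b :: l)

@[simp] lemma lastD_single (a : ℕ) : lastD [a] = a := rfl
lemma lastD_cons_cons (a b : ℕ) (l : List ℕ) : lastD (a :: b :: l) = lastD (b :: l) := rfl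

lemma lastD_cons_of_ne (a : ℕ) (l : List ℕ) (h : l ≠ []) : lastD (a :: l) = lastD l := by
  cases l with
  | nil => exact absurd rfl h
  | cons b t => rfl

lemma lastD_concat : ∀ (l : List ℕ) (a : ℕ), lastD (l ++ [a]) = a
  | [], a => rfl
  | [b], a => rfl
  | b :: c :: l, a => by
    have := lastD_concat (c :: l) a
    simpa [lastD_cons_cons] using this

lemma lastD_mem : ∀ (l : List ℕ), l ≠ [] → lastD l ∈ l
  | [a], _ => by simp
  | a :: b :: l, _ => by
    have := lastD_mem (b :: l) (by simp)
    simp [lastD_cons_cons]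
    right; simpa using this

lemma lastD_eq_getD : ∀ (l : List ℕ), l ≠ [] → lastD l = l.getD (l.length - 1) 0
  | [a], _ => rfl
  | a :: b :: l, _ => by
    have ih := lastD_eq_getD (b :: l) (by simp)
    have hlen : (a :: b :: l).length - 1 = (b :: l).length := by simp
    rw [lastD_cons_cons, ih, hlen]
    simp

lemma lastD_append (l₁ l₂ : List ℕ) (h : l₂ ≠ []) : lastD (l₁ ++ l₂) = lastD l₂ := by
  induction l₁ with
  | nil => rfl
  | cons a t ih =>
    have hne : t ++ l₂ ≠ [] := by simp [h]
    rw [List.cons_append, lastD_cons_of_ne _ _ hne, ih]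

lemma lastD_append_cons (l₁ : List ℕ) (b : ℕ) (l₂ : List ℕ) :
    lastD (l₁ ++ b :: l₂) = lastD (b :: l₂) := lastD_append _ _ (by simp)

lemma lastD_cons_append (a : ℕ) (l₁ : List ℕ) (b : ℕ) (l₂ : List ℕ) :
    lastD (a :: (l₁ ++ b :: l₂)) = lastD (b :: l₂) := by
  rw [show a :: (l₁ ++ b :: l₂) = (a :: l₁) ++ b :: l₂ from rfl, lastD_append_cons]

lemma g_append_cons : ∀ (A : List ℕ) (b : ℕ) (B : List ℕ),
    g (A ++ b :: B) = g (A ++ [b]) + g (b :: B)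
  | [], b, B => by simp
  | [a], b, B => by simp [g_cons_cons]
  | a :: a' :: A, b, B => by
    have ih := g_append_cons (a' :: A) b B
    simp only [List.cons_append, g_cons_cons] at *
    omega

lemma g_snoc : ∀ (A : List ℕ) (a b : ℕ),
    g ((a :: A) ++ [b]) = g (a :: A) + cnt (lastD (a :: A)) b
  | [], a, b => by simp [g_cons_cons]
  | a' :: A, a, b => by
    have ih := g_snoc A a' b
    simp only [List.cons_append, g_cons_cons, lastD_cons_cons] at *
    omega

lemma g_block (A : List ℕ) (hA : A ≠ []) (b : ℕ) (B : List ℕ) :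
    g (A ++ b :: B) = g A + cnt (lastD A) b + g (b :: B) := by
  obtain ⟨a, A', rfl⟩ := List.exists_cons_of_ne_nil hA
  rw [g_append_cons, g_snoc]

lemma g_reverse : ∀ l : List ℕ, g l.reverse = g l
  | [] => rfl
  | [a] => rfl
  | a :: b :: l => by
    have ih := g_reverse (b :: l)
    have h1 : (a :: b :: l).reverse = (b :: l).reverse ++ a :: [] := by simp
    rw [h1, g_block _ (by simp) a []]
    have h2 : lastD ((b :: l).reverse) = b := by
      have : (b :: l).reverse = l.reverse ++ [b] := by simp
      rw [this, lastD_concat]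
    rw [h2, ih, g_cons_cons]
    simp [cnt_comm a b]
    omega

lemma countP_pair : ∀ l : List ℕ,
    (l.zip (l.drop 1)).countP (fun p => !(p.1 + 1 == p.2 || p.2 + 1 == p.1)) = g l
  | [] => rfl
  | [a] => rfl
  | a :: b :: t => by
    have ih := countP_pair (b :: t)
    have hz : (a :: b :: t).zip ((a :: b :: t).drop 1) =
        (a, b) :: ((b :: t).zip ((b :: t).drop 1)) := by simp
    rw [hz, List.countP_cons, ih, g_cons_cons]
    by_cases h : a + 1 = b ∨ b + 1 = a
    · have : (!(a + 1 == b || b + 1 == a)) = false := by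
        rcases h with h | h <;> simp [h]
      simp [this, cnt, h]
    · have h1 : ¬ a + 1 = b := fun hh => h (Or.inl hh)
      have h2 : ¬ b + 1 = a := fun hh => h (Or.inr hh)
      have : (!(a + 1 == b || b + 1 == a)) = true := by
        simp [h1, h2]
      simp [this, cnt, h1, h2]
      omega

lemma bp_cons (a : ℕ) (l : List ℕ) : bp (a :: l) = 1 + g l := by
  unfold bp
  have h1 : (a :: l).drop 1 = l := rfl
  have h2 : (a :: l).drop 2 = l.drop 1 := rfl
  rw [h1, h2, countP_pair]


/-- Split off the maximal initial run of consecutive (±1) values. -/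
def sp : List ℕ → List ℕ × List ℕ
  | a :: b :: l =>
    if a + 1 = b ∨ b + 1 = a then
      (a :: (sp (b :: l)).1, (sp (b :: l)).2)
    else ([a], b :: l)
  | l => (l, [])

lemma sp_cons2 (a b : ℕ) (l : List ℕ) : sp (a :: b :: l) =
    if a + 1 = b ∨ b + 1 = a then
      (a :: (sp (b :: l)).1, (sp (b :: l)).2)
    else ([a], b :: l) := rfl

lemma sp_fst_head : ∀ (a : ℕ) (l : List ℕ), ∃ S', (sp (a :: l)).1 = a :: S'
  | a, [] => ⟨[], rfl⟩
  | a, b :: t => by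
    rw [sp_cons2]
    by_cases h : a + 1 = b ∨ b + 1 = a
    · rw [if_pos h]; exact ⟨(sp (b :: t)).1, rfl⟩
    · rw [if_neg h]; exact ⟨[], rfl⟩

lemma sp_append : ∀ l : List ℕ, (sp l).1 ++ (sp l).2 = l
  | [] => rfl
  | [a] => rfl
  | a :: b :: l => by
    have ih := sp_append (b :: l)
    rw [sp_cons2]
    by_cases h : a + 1 = b ∨ b + 1 = a
    · rw [if_pos h]; simpa using ih
    · rw [if_neg h]; rfl

lemma sp_bp : ∀ (l : List ℕ) (e : ℕ) (R : List ℕ),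
    (sp l).2 = e :: R → cnt (lastD (sp l).1) e = 1
  | [], e, R => by intro h; simp [sp] at h
  | [a], e, R => by intro h; simp [sp] at h
  | a :: b :: l, e, R => by
    intro h
    rw [sp_cons2] at h ⊢
    by_cases hab : a + 1 = b ∨ b + 1 = a
    · rw [if_pos hab] at h ⊢
      simp only at h ⊢
      have ih := sp_bp (b :: l) e R h
      obtain ⟨S', hS'⟩ := sp_fst_head b l
      rw [lastD_cons_of_ne a _ (by rw [hS']; simp)]
      exact ih
    · rw [if_neg hab] at h ⊢
      simp only at h ⊢
      have : e = b := by injection h with h1 h2; omega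
      subst this
      exact cnt_eq_one_of_not a e hab

lemma sp_ge : ∀ (l : List ℕ) (x : ℕ), (x :: l).Nodup →
    (∀ b t, l = b :: t → b + 1 ≠ x) → ∀ y ∈ (sp (x :: l)).1, x ≤ y
  | [], x, _, _ => by intro y hy; simp [sp] at hy; omega
  | b :: t, x, hnd, hcond => by
    intro y hy
    rw [sp_cons2] at hy
    by_cases hab : x + 1 = b ∨ b + 1 = x
    · have hb : x + 1 = b := by
        rcases hab with h | h
        · exact h
        · exact absurd h (hcond b t rfl)
      rw [if_pos hab] at hy
      simp only [List.mem_cons] at hy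
      rcases hy with rfl | hy
      · exact le_refl y
      · have hnd' : (b :: t).Nodup := hnd.of_cons
        have hcond' : ∀ b₂ t₂, t = b₂ :: t₂ → b₂ + 1 ≠ b := by
          intro b₂ t₂ ht hb₂
          have hx : x ∉ b :: t := (List.nodup_cons.mp hnd).1
          have hmem : b₂ ∈ b :: t := by rw [ht]; simp
          have hbx : b₂ = x := by omega
          exact hx (hbx ▸ hmem)
        have := sp_ge t b hnd' hcond' y hy
        omega
    · rw [if_neg hab] at hy
      simp at hy; omega

lemma sp_le : ∀ (l : List ℕ) (x : ℕ), (x :: l).Nodup →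
    (∀ b t, l = b :: t → x + 1 ≠ b) → ∀ y ∈ (sp (x :: l)).1, y ≤ x
  | [], x, _, _ => by intro y hy; simp [sp] at hy; omega
  | b :: t, x, hnd, hcond => by
    intro y hy
    rw [sp_cons2] at hy
    by_cases hab : x + 1 = b ∨ b + 1 = x
    · have hb : b + 1 = x := by
        rcases hab with h | h
        · exact absurd h (hcond b t rfl)
        · exact h
      rw [if_pos hab] at hy
      simp only [List.mem_cons] at hy
      rcases hy with rfl | hy
      · exact le_refl y
      · have hnd' : (b :: t).Nodup := hnd.of_cons
        have hcond' : ∀ b₂ t₂, t = b₂ :: t₂ → b + 1 ≠ b₂ := by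
          intro b₂ t₂ ht hb₂
          have hx : x ∉ b :: t := (List.nodup_cons.mp hnd).1
          have hmem : b₂ ∈ b :: t := by rw [ht]; simp
          have hbx : b₂ = x := by omega
          exact hx (hbx ▸ hmem)
        have := sp_le t b hnd' hcond' y hy
        omega
    · rw [if_neg hab] at hy
      simp at hy; omega

/-- A prefix reversal removing a breakpoint. -/
lemma rev_works (n x zz : ℕ) (G B : List ℕ) (hG : G ≠ [])
    (hlen : (x :: (G ++ zz :: B)).length = n + 1)
    (hbp : cnt (lastD G) zz = 1) (hadj : cnt x zz = 0) :
    ∃ o : PrefOp, o.Valid n ∧ o.isTransrev = false ∧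
      bp (o.apply (0 :: x :: (G ++ zz :: B))) ≤ bp (0 :: x :: (G ++ zz :: B)) - 1 := by
  refine ⟨.rev (G.length + 2), ?_, rfl, ?_⟩
  · constructor
    · have := List.length_pos_iff.mpr hG; omega
    · simp at hlen; omega
  · have happly : PrefOp.apply (0 :: x :: (G ++ zz :: B)) (.rev (G.length + 2)) =
        0 :: ((x :: G).reverse ++ zz :: B) := by
      show prefixReversal _ _ = _
      unfold prefixReversal
      have e1 : (0 :: x :: (G ++ zz :: B)).take 1 = [0] := rfl
      have e2 : (0 :: x :: (G ++ zz :: B)).drop 1 = (x :: G) ++ zz :: B := by simp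
      have e3 : (0 :: x :: (G ++ zz :: B)).drop (G.length + 2) = zz :: B := by
        have : (0 :: x :: (G ++ zz :: B)) = (0 :: x :: G) ++ zz :: B := by simp
        rw [this]
        exact List.drop_left' (by simp)
      rw [e1, e2, e3]
      have e4 : (G.length + 2 - 1) = (x :: G).length := by simp
      rw [e4, List.take_left]
      simp
    rw [happly]
    have hrevne : (x :: G).reverse ≠ [] := by simp
    have hlast : lastD ((x :: G).reverse) = x := by
      have : (x :: G).reverse = G.reverse ++ [x] := by simp
      rw [this, lastD_concat]
    have hnew : g ((x :: G).reverse ++ zz :: B) = g (x :: G) + g (zz :: B) := by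
      rw [g_block _ hrevne, hlast, g_reverse, hadj]
      omega
    have hold : g ((x :: G) ++ zz :: B) = g (x :: G) + 1 + g (zz :: B) := by
      rw [g_block _ (by simp), lastD_cons_of_ne x G hG, hbp]
    rw [bp_cons, bp_cons, hnew]
    have : (x :: (G ++ zz :: B)) = (x :: G) ++ zz :: B := by simp
    rw [this, hold]
    omega

/-- A prefix transposition removing a breakpoint. -/
lemma trans_works (n x e d : ℕ) (S' E' D' : List ℕ)
    (hlen : ((x :: S') ++ (e :: E') ++ d :: D').length = n + 1)
    (h1 : cnt (lastD (x :: S')) e = 1)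
    (h2 : cnt (lastD (e :: E')) d = 1)
    (h3 : cnt (lastD (e :: E')) x = 0) :
    ∃ o : PrefOp, o.Valid n ∧ o.isTransrev = false ∧
      bp (o.apply (0 :: ((x :: S') ++ (e :: E') ++ d :: D'))) ≤
        bp (0 :: ((x :: S') ++ (e :: E') ++ d :: D')) - 1 := by
  simp only [List.length_append, List.length_cons] at hlen
  refine ⟨.trans ((x :: S').length + 1) ((x :: S').length + (e :: E').length + 1), ?_, rfl, ?_⟩
  · refine ⟨by simp, by simp, ?_⟩
    simp
    omega
  · have happly : PrefOp.apply (0 :: ((x :: S') ++ (e :: E') ++ d :: D'))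
        (.trans ((x :: S').length + 1) ((x :: S').length + (e :: E').length + 1)) =
        0 :: ((e :: E') ++ (x :: S') ++ d :: D') := by
      show prefixTransposition _ _ _ = _
      unfold prefixTransposition
      have e1 : (0 :: ((x :: S') ++ (e :: E') ++ d :: D')).take 1 = [0] := rfl
      have e2 : (0 :: ((x :: S') ++ (e :: E') ++ d :: D')).drop ((x :: S').length + 1) =
          (e :: E') ++ d :: D' := by
        rw [List.drop_succ_cons, List.append_assoc]
        exact List.drop_left' rfl
      have e3 : ((e :: E') ++ d :: D').take
          ((x :: S').length + (e :: E').length + 1 - ((x :: S').length + 1)) = e :: E' := by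
        have h : (x :: S').length + (e :: E').length + 1 - ((x :: S').length + 1) =
            (e :: E').length := by omega
        rw [h, List.take_left]
      have e4 : (0 :: ((x :: S') ++ (e :: E') ++ d :: D')).drop 1 =
          (x :: S') ++ ((e :: E') ++ d :: D') := by simp
      have e5 : ((x :: S') ++ ((e :: E') ++ d :: D')).take ((x :: S').length + 1 - 1) =
          x :: S' := by
        have h : (x :: S').length + 1 - 1 = (x :: S').length := by omega
        rw [h, List.take_left]
      have e6 : (0 :: ((x :: S') ++ (e :: E') ++ d :: D')).drop
          ((x :: S').length + (e :: E').length + 1) = d :: D' := by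
        rw [List.drop_succ_cons]
        have h : (x :: S') ++ (e :: E') ++ d :: D' = ((x :: S') ++ (e :: E')) ++ d :: D' := by
          simp
        rw [h]
        exact List.drop_left' (by simp; omega)
      rw [e1, e2, e3, e4, e5, e6]
      simp
    rw [happly, bp_cons, bp_cons]
    have hnew : g ((e :: E') ++ (x :: S') ++ d :: D') =
        g (e :: E') + g (x :: S') + cnt (lastD (x :: S')) d + g (d :: D') := by
      have r0 : (e :: E') ++ (x :: S') ++ d :: D' = (e :: E') ++ (x :: (S' ++ d :: D')) := by
        simp
      have r2 : x :: (S' ++ d :: D') = (x :: S') ++ d :: D' := by simp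
      rw [r0, g_block (e :: E') (by simp) x (S' ++ d :: D'), h3, r2,
        g_block (x :: S') (by simp) d D']
      omega
    have hold : g ((x :: S') ++ (e :: E') ++ d :: D') =
        g (x :: S') + 1 + g (e :: E') + 1 + g (d :: D') := by
      have r0 : (x :: S') ++ (e :: E') ++ d :: D' = (x :: S') ++ (e :: (E' ++ d :: D')) := by
        simp
      have r2 : e :: (E' ++ d :: D') = (e :: E') ++ d :: D' := by simp
      rw [r0, g_block (x :: S') (by simp) e (E' ++ d :: D'), h1, r2,
        g_block (e :: E') (by simp) d D', h2]
      omega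
    rw [hnew, hold]
    have := cnt_le_one (lastD (x :: S')) d
    omega

/-- if `π₁ ≠ 1` then some prefix reversal or prefix
transposition removes at least one breakpoint. -/
theorem exists_op_removing_breakpoint_of_first_ne_one
    (n : ℕ) (π : List ℕ) (hπ : IsPerm n π)
    (h1 : π.getD 1 0 ≠ 1) :
    ∃ o : PrefOp, o.Valid n ∧ o.isTransrev = false ∧
      bp (o.apply π) ≤ bp π - 1 := by
  obtain ⟨hperm, h0, hlastg⟩ := hπ
  have hlenπ : π.length = n + 2 := by simpa using hperm.length_eq
  rcases π with _ | ⟨a, L⟩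
  · simp at hlenπ
  have ha : a = 0 := by simpa using h0
  subst ha
  have hndπ : (0 :: L).Nodup := hperm.symm.nodup List.nodup_range
  have hmem : ∀ v, v ∈ 0 :: L ↔ v < n + 2 := fun v => by
    rw [hperm.mem_iff, List.mem_range]
  have hlenL : L.length = n + 1 := by simpa using hlenπ
  rcases L with _ | ⟨x, M⟩
  · simp at hlenL
  have hx1 : x ≠ 1 := by simpa using h1
  have h0m : 0 ∉ x :: M := (List.nodup_cons.mp hndπ).1
  have hndL : (x :: M).Nodup := (List.nodup_cons.mp hndπ).2
  have hx0 : x ≠ 0 := fun h => h0m (by simp [h])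
  obtain ⟨z, hz1, rfl⟩ : ∃ z, 1 ≤ z ∧ x = z + 1 := ⟨x - 1, by omega, by omega⟩
  have hmemL : ∀ v, 1 ≤ v → v < n + 2 → v ∈ (z+1) :: M := by
    intro v hv1 hv2
    have hv := (hmem v).2 hv2
    rcases List.mem_cons.mp hv with h | h
    · omega
    · exact h
  have hub : ∀ v ∈ (z+1) :: M, v < n + 2 := fun v hv =>
    (hmem v).1 (List.mem_cons_of_mem _ hv)
  have hzM : z ∈ M := by
    have hz2 : z < n + 2 := by
      have := hub (z+1) (List.mem_cons_self)
      omega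
    have hmz := hmemL z hz1 hz2
    rcases List.mem_cons.mp hmz with h | h
    · omega
    · exact h
  have hlast : lastD ((z+1) :: M) = n + 1 := by
    have hne : (z+1) :: M ≠ [] := by simp
    rw [lastD_eq_getD _ hne]
    have hl1 : ((z+1) :: M).length - 1 = n := by rw [hlenL]; omega
    
    rw [hl1]
    rw [List.getD_cons_succ] at hlastg
    exact hlastg
  obtain ⟨A, B, rfl⟩ : ∃ A B, M = A ++ z :: B := List.append_of_mem hzM
  have hdup1 : (z+1) ∉ A ++ z :: B := (List.nodup_cons.mp hndL).1
  have hndT : (A ++ z :: B).Nodup := (List.nodup_cons.mp hndL).2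
  have hdisj : ∀ u ∈ A, u ∉ z :: B := fun u hu => (List.nodup_append'.mp hndT).2.2 hu
  have hzA : z ∉ A := fun h => hdisj z h (List.mem_cons_self)
  rcases List.eq_nil_or_concat A with rfl | ⟨A', y, hA⟩
  · -- A = [] : π₂ = z = x − 1
    simp only [List.nil_append] at hdup1 hndT hlast hlenL hndL hub hmemL ⊢
    have hxn : z + 1 ≠ n + 1 := by
      intro heq
      have h1l : lastD ((z+1) :: z :: B) = lastD (z :: B) := lastD_cons_cons _ _ _
      have h2l : lastD (z :: B) = n + 1 := by rw [← h1l]; exact hlast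
      apply hdup1
      rw [show z + 1 = lastD (z :: B) by omega]
      exact lastD_mem (z :: B) (by simp)
    have hz2B : z + 2 ∈ B := by
      have hub1 : z + 1 < n + 2 := hub (z+1) (List.mem_cons_self)
      have hmm2 : z + 2 ∈ (z+1) :: z :: B := hmemL (z+2) (by omega) (by omega)
      simp only [List.mem_cons] at hmm2
      rcases hmm2 with h | h | h
      · omega
      · omega
      · exact h
    obtain ⟨A₂, B₂, rfl⟩ : ∃ s t, B = s ++ (z+2) :: t := List.append_of_mem hz2B
    set w := lastD (z :: A₂) with hwdef
    by_cases hc : cnt w (z + 2) = 1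
    · -- reversal removing the breakpoint before z+2
      rw [hwdef] at hc
      exact rev_works n (z+1) (z+2) (z :: A₂) B₂ (by simp)
        (by simp only [List.length_cons, List.length_append] at hlenL ⊢; omega)
        hc (cnt_succ (z+1))
    · -- w = z + 3 ; transposition
      have hy2mem : w ∈ z :: A₂ := hwdef ▸ lastD_mem _ (by simp)
      have hy2ne : w ≠ z + 1 := by
        intro h
        apply hdup1
        rw [← h]
        simp only [List.mem_cons] at hy2mem ⊢
        rcases hy2mem with h' | h'
        · exact Or.inl h'
        · exact Or.inr (by simp [h'])
      have hcasesv := cnt_cases _ _ hc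
      have hy2 : w = z + 3 := by omega
      have hA₂ne : A₂ ≠ [] := by
        intro h
        subst h
        simp [lastD] at hwdef
        omega
      obtain ⟨A₂'c, y₂', hA₂eq⟩ := (List.eq_nil_or_concat A₂).resolve_left hA₂ne
      have hA₂' : A₂ = A₂'c ++ [y₂'] := by simpa using hA₂eq
      subst hA₂'
      have hy₂'v : y₂' = z + 3 := by
        have hl2 : lastD (z :: (A₂'c ++ [y₂'])) = y₂' := by
          rw [show z :: (A₂'c ++ [y₂']) = (z :: A₂'c) ++ [y₂'] from by simp, lastD_concat]
        rw [hl2] at hwdef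
        omega
      subst hy₂'v
      rcases B₂ with _ | ⟨d, D'⟩
      · exfalso
        have hzn : n + 1 = z + 2 := by
          rw [← hlast]
          simp [lastD_cons_append, lastD_append_cons, lastD_cons_cons]
        have := hub (z+3) (by simp)
        omega
      · have hcond : ∀ b t, z :: ((A₂'c ++ [z+3]) ++ (z+2) :: d :: D') = b :: t →
            (z + 1) + 1 ≠ b := by
          intro b t heq
          have h' := congrArg (fun l => l.headD 0) heq
          simp at h'
          omega
        have hle := sp_le (z :: ((A₂'c ++ [z+3]) ++ (z+2) :: d :: D')) (z+1) hndL hcond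
        obtain ⟨S₁, hS₁⟩ := sp_fst_head (z+1) (z :: ((A₂'c ++ [z+3]) ++ (z+2) :: d :: D'))
        have happ := sp_append ((z+1) :: z :: ((A₂'c ++ [z+3]) ++ (z+2) :: d :: D'))
        have hform : ((z+1) :: S₁) ++
            (sp ((z+1) :: z :: ((A₂'c ++ [z+3]) ++ (z+2) :: d :: D'))).2 =
            ((z+1) :: z :: A₂'c) ++ ((z+3) :: (z+2) :: d :: D') := by
          rw [← hS₁, happ]
          simp
        have hCex : ∃ C, (z+1) :: z :: A₂'c = ((z+1) :: S₁) ++ C ∧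
            (sp ((z+1) :: z :: ((A₂'c ++ [z+3]) ++ (z+2) :: d :: D'))).2 =
              C ++ (z+3) :: (z+2) :: d :: D' := by
          rcases List.append_eq_append_iff.mp hform with ⟨C, hG, hR⟩ | ⟨c', hS2, hR2⟩
          · exact ⟨C, hG, hR⟩
          · rcases c' with _ | ⟨c₀, cs⟩
            · have hG : (z+1) :: z :: A₂'c = (z+1) :: S₁ := by simpa using hS2.symm
              exact ⟨[], by simp [hG], by simpa using hR2.symm⟩
            · exfalso
              have hc₀ : c₀ = z + 3 := by
                rw [List.cons_append] at hR2
                have h' := congrArg (fun l => l.headD 0) hR2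
                simpa using h'.symm
              have hc₀mem : c₀ ∈ (z+1) :: S₁ := by
                rw [hS2]
                simp
              rw [← hS₁] at hc₀mem
              have := hle c₀ hc₀mem
              omega
        obtain ⟨C, hG, hR⟩ := hCex
        obtain ⟨e, E₁, hE⟩ := List.exists_cons_of_ne_nil (show C ++ [z+3, z+2] ≠ [] by simp)
        have hsp2 : (sp ((z+1) :: z :: ((A₂'c ++ [z+3]) ++ (z+2) :: d :: D'))).2 =
            e :: (E₁ ++ d :: D') := by
          rw [hR, show C ++ (z+3) :: (z+2) :: d :: D' = (C ++ [z+3, z+2]) ++ d :: D'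
            from by simp, hE]
          simp
        have h1' : cnt (lastD ((z+1) :: S₁)) e = 1 := by
          rw [← hS₁]
          exact sp_bp _ e _ hsp2
        have hndT2 : ((A₂'c ++ [z+3]) ++ (z+2) :: d :: D').Nodup :=
          (List.nodup_cons.mp hndT).2
        have h2' : cnt (lastD (e :: E₁)) d = 1 := by
          rw [← hE, show C ++ [z+3, z+2] = (C ++ [z+3]) ++ [z+2] from by simp, lastD_concat]
          apply cnt_eq_one_of_not
          intro hcon
          rcases hcon with h | h
          · -- z + 3 = d, contradiction with nodup
            have hdsj := (List.nodup_append'.mp hndT2).2.2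
            exact hdsj (show z+3 ∈ A₂'c ++ [z+3] by simp) (by rw [h]; simp)
          · -- d + 1 = z + 2, so d = z + 1
            apply hdup1
            rw [show z + 1 = d by omega]
            simp
        have h3' : cnt (lastD (e :: E₁)) (z+1) = 0 := by
          rw [← hE, show C ++ [z+3, z+2] = (C ++ [z+3]) ++ [z+2] from by simp, lastD_concat]
          exact cnt_succ' (z+1)
        have hLt : (z+1) :: z :: ((A₂'c ++ [z+3]) ++ (z+2) :: d :: D') =
            ((z+1) :: S₁) ++ (e :: E₁) ++ d :: D' := by
          conv_lhs => rw [← happ]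
          rw [hS₁, hsp2]
          simp
        rw [hLt]
        exact trans_works n (z+1) e d S₁ E₁ D' (by rw [← hLt]; exact hlenL) h1' h2' h3'
  · have hA' : A = A' ++ [y] := by simpa using hA
    subst hA'
    by_cases hc : cnt y z = 1
    · -- reversal removing the breakpoint before z
      exact rev_works n (z+1) z (A' ++ [y]) B (by simp) hlenL (by rw [lastD_concat]; exact hc) (cnt_succ' z)
    · -- y + 1 = z ; transposition
      have hcc := cnt_cases y z hc
      have hyz1 : y ≠ z + 1 := by
        intro h
        apply hdup1
        rw [← h]
        simp
      have hy : y + 1 = z := by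
        rcases hcc with h | h
        · exact h
        · omega
      rcases B with _ | ⟨d, D'⟩
      · exfalso
        have hzn : n + 1 = z := by
          rw [← hlast]
          simp [lastD_cons_append, lastD_append_cons, lastD_cons_cons]
        have := hub (z+1) (List.mem_cons_self)
        omega
      · have hcond : ∀ b t, (A' ++ [y]) ++ z :: d :: D' = b :: t → b + 1 ≠ z + 1 := by
          intro b t heq hb
          have hbz : b = z := by omega
          obtain ⟨c, cs, hcs⟩ := List.exists_cons_of_ne_nil (show A' ++ [y] ≠ [] by simp)
          rw [hcs, List.cons_append] at heq
          have hcb : c = b := by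
            have h' := congrArg (fun l => l.headD 0) heq
            simpa using h'
          apply hzA
          rw [hcs]
          rw [show z = c by omega]
          simp
        have hge := sp_ge ((A' ++ [y]) ++ z :: d :: D') (z+1) hndL hcond
        obtain ⟨S₁, hS₁⟩ := sp_fst_head (z+1) ((A' ++ [y]) ++ z :: d :: D')
        have happ := sp_append ((z+1) :: ((A' ++ [y]) ++ z :: d :: D'))
        have hform : ((z+1) :: S₁) ++ (sp ((z+1) :: ((A' ++ [y]) ++ z :: d :: D'))).2 =
            ((z+1) :: A') ++ (y :: z :: d :: D') := by
          rw [← hS₁, happ]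
          simp
        have hCex : ∃ C, (z+1) :: A' = ((z+1) :: S₁) ++ C ∧
            (sp ((z+1) :: ((A' ++ [y]) ++ z :: d :: D'))).2 = C ++ y :: z :: d :: D' := by
          rcases List.append_eq_append_iff.mp hform with ⟨C, hG, hR⟩ | ⟨c', hS2, hR2⟩
          · exact ⟨C, hG, hR⟩
          · rcases c' with _ | ⟨c₀, cs⟩
            · have hG : (z+1) :: A' = (z+1) :: S₁ := by simpa using hS2.symm
              exact ⟨[], by simp [hG], by simpa using hR2.symm⟩
            · exfalso
              have hc₀ : c₀ = y := by
                rw [List.cons_append] at hR2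
                have h' := congrArg (fun l => l.headD 0) hR2
                simpa using h'.symm
              have hc₀mem : c₀ ∈ (z+1) :: S₁ := by
                rw [hS2]
                simp
              rw [← hS₁] at hc₀mem
              have := hge c₀ hc₀mem
              omega
        obtain ⟨C, hG, hR⟩ := hCex
        obtain ⟨e, E₁, hE⟩ := List.exists_cons_of_ne_nil (show C ++ [y, z] ≠ [] by simp)
        have hsp2 : (sp ((z+1) :: ((A' ++ [y]) ++ z :: d :: D'))).2 = e :: (E₁ ++ d :: D') := by
          rw [hR, show C ++ y :: z :: d :: D' = (C ++ [y, z]) ++ d :: D' from by simp, hE]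
          simp
        have h1' : cnt (lastD ((z+1) :: S₁)) e = 1 := by
          rw [← hS₁]
          exact sp_bp _ e _ hsp2
        have h2' : cnt (lastD (e :: E₁)) d = 1 := by
          rw [← hE, show C ++ [y, z] = (C ++ [y]) ++ [z] from by simp, lastD_concat]
          apply cnt_eq_one_of_not
          intro hcon
          rcases hcon with h | h
          · apply hdup1
            rw [h]
            simp
          · have hdy : d = y := by omega
            exact hdisj y (by simp) (by rw [hdy]; simp)
        have h3' : cnt (lastD (e :: E₁)) (z+1) = 0 := by
          rw [← hE, show C ++ [y, z] = (C ++ [y]) ++ [z] from by simp, lastD_concat]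
          exact cnt_succ z
        have hLt : (z+1) :: ((A' ++ [y]) ++ z :: d :: D') =
            ((z+1) :: S₁) ++ (e :: E₁) ++ d :: D' := by
          conv_lhs => rw [← happ]
          rw [hS₁, hsp2]
          simp
        rw [hLt]
        exact trans_works n (z+1) e d S₁ E₁ D' (by rw [← hLt]; exact hlenL) h1' h2' h3'
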